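/- arXiv:2009.07647 — 4 statements merged into one kernel-verified Lean document; each statement's English description precedes it below -/
import Mathlib

section
/- For all real a ≥ b > 0 and all t ∈ ℝ, the triangle T(t) of the homothetic Poncelet family satisfies s₁(t)² + s₂(t)² + s₃(t)² = (9/2)·(a² + b²), where s₁(t), s₂(t), s₃(t) are its sidelengths. In particular, the sum of squared sidelengths is independent of t. -/
open Real

/-- A point of the Euclidean plane `ℝ²`. -/
noncomputable def pt (x y : ℝ) : EuclideanSpace ℝ (Fin 2) := WithLp.toLp 2 ![x, y]

/-- Vertex `k` of the triangle `T(t)` of the homothetic Poncelet family. -/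
noncomputable def homP (a b t : ℝ) (k : ℕ) : EuclideanSpace ℝ (Fin 2) :=
  pt (a * Real.cos (t + 2 * π * k / 3)) (b * Real.sin (t + 2 * π * k / 3))

lemma dist_pt_sq (x y x' y' : ℝ) :
    dist (pt x y) (pt x' y') ^ 2 = (x - x') ^ 2 + (y - y') ^ 2 := by
  rw [EuclideanSpace.dist_eq]
  rw [Real.sq_sqrt (by positivity)]
  simp [pt, Fin.sum_univ_two, Real.dist_eq, sq_abs]

/-- The triangles of the homothetic Poncelet family all have sum of squared sidelengths
equal to `(9/2)·(a² + b²)`, independently of `t`. -/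
theorem homothetic_sum_sq_sidelengths_invariant (a b : ℝ) (hab : a ≥ b) (hb : 0 < b) (t : ℝ) :
    dist (homP a b t 1) (homP a b t 2) ^ 2 +
    dist (homP a b t 2) (homP a b t 0) ^ 2 +
    dist (homP a b t 0) (homP a b t 1) ^ 2 = (9 / 2) * (a ^ 2 + b ^ 2) := by
  have h1 : t + 2 * π * (1:ℕ) / 3 = t + (π - π / 3) := by push_cast; ring
  have h2 : t + 2 * π * (2:ℕ) / 3 = t + (π + π / 3) := by push_cast; ring
  have h0 : t + 2 * π * (0:ℕ) / 3 = t := by push_cast; ring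
  have hc1 : Real.cos (t + 2 * π * (1:ℕ) / 3)
      = -(1/2) * Real.cos t - Real.sqrt 3 / 2 * Real.sin t := by
    rw [h1, Real.cos_add, Real.cos_pi_sub, Real.sin_pi_sub,
      Real.cos_pi_div_three, Real.sin_pi_div_three]; ring
  have hs1 : Real.sin (t + 2 * π * (1:ℕ) / 3)
      = -(1/2) * Real.sin t + Real.sqrt 3 / 2 * Real.cos t := by
    rw [h1, Real.sin_add, Real.cos_pi_sub, Real.sin_pi_sub,
      Real.cos_pi_div_three, Real.sin_pi_div_three]; ring
  have hc2 : Real.cos (t + 2 * π * (2:ℕ) / 3)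
      = -(1/2) * Real.cos t + Real.sqrt 3 / 2 * Real.sin t := by
    rw [h2, Real.cos_add, Real.cos_add, Real.sin_add, Real.cos_pi, Real.sin_pi,
      Real.cos_pi_div_three, Real.sin_pi_div_three]; ring
  have hs2 : Real.sin (t + 2 * π * (2:ℕ) / 3)
      = -(1/2) * Real.sin t - Real.sqrt 3 / 2 * Real.cos t := by
    rw [h2, Real.sin_add, Real.cos_add, Real.sin_add, Real.cos_pi, Real.sin_pi,
      Real.cos_pi_div_three, Real.sin_pi_div_three]; ring
  have hsq3 : Real.sqrt 3 ^ 2 = 3 := Real.sq_sqrt (by norm_num)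
  have hpy : Real.sin t ^ 2 + Real.cos t ^ 2 = 1 := Real.sin_sq_add_cos_sq t
  simp only [homP, dist_pt_sq, hc1, hs1, hc2, hs2, h0]
  linear_combination (3/2*(a^2*Real.sin t^2+b^2*Real.cos t^2))*hsq3 + (9/2*(a^2+b^2))*hpy
end

section
/- For all real a ≥ b > 0 and all t ∈ ℝ, the triangle T(t) of the homothetic Poncelet family satisfies (s₁(t)² + s₂(t)² + s₃(t)²)/(4·Δ(t)) = √3·(a² + b²)/(2ab), where s₁(t), s₂(t), s₃(t) are its sidelengths and Δ(t) its area. Equivalently, the family is equibrocardal: its Brocard angle ω, defined by cot ω = (s₁² + s₂² + s₃²)/(4Δ), is independent of t and satisfies cot ω = √3·(a² + b²)/(2ab). -/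
open Real

/-- Determinant of two plane vectors. -/
noncomputable def det2 (u v : EuclideanSpace ℝ (Fin 2)) : ℝ := u 0 * v 1 - u 1 * v 0

/-- Area of the triangle with vertices `A B C`. -/
noncomputable def triArea (A B C : EuclideanSpace ℝ (Fin 2)) : ℝ :=
  (1 / 2) * |det2 (B - A) (C - A)|

lemma dist_pt (x y x' y' : ℝ) : dist (pt x y) (pt x' y') ^ 2 = (x - x')^2 + (y - y')^2 := by
  rw [EuclideanSpace.dist_eq, Real.sq_sqrt (by positivity)]
  simp [pt, Fin.sum_univ_two, Real.dist_eq, sq_abs]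

lemma sub_pt (x y x' y' : ℝ) : pt x y - pt x' y' = pt (x - x') (y - y') := by
  ext i
  fin_cases i <;> simp [pt]

lemma pt0 (x y : ℝ) : pt x y 0 = x := by simp [pt]
lemma pt1 (x y : ℝ) : pt x y 1 = y := by simp [pt]

lemma c23 : Real.cos (2*π/3) = -(1/2) := by
  rw [show 2*π/3 = π - π/3 by ring, Real.cos_pi_sub, Real.cos_pi_div_three]
lemma s23 : Real.sin (2*π/3) = Real.sqrt 3 / 2 := by
  rw [show 2*π/3 = π - π/3 by ring, Real.sin_pi_sub, Real.sin_pi_div_three]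
lemma c43 : Real.cos (2*π*2/3) = -(1/2) := by
  rw [show 2*π*2/3 = π + π/3 by ring]
  simp [Real.cos_add, Real.cos_pi_div_three]
lemma s43 : Real.sin (2*π*2/3) = -(Real.sqrt 3 / 2) := by
  rw [show 2*π*2/3 = π + π/3 by ring]
  simp [Real.sin_add, Real.sin_pi_div_three]

lemma homP0 (a b t : ℝ) : homP a b t 0 = pt (a * Real.cos t) (b * Real.sin t) := by
  simp [homP]

lemma homP1 (a b t : ℝ) : homP a b t 1 =
    pt (a * (Real.cos t * (-(1/2)) - Real.sin t * (Real.sqrt 3 / 2)))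
       (b * (Real.sin t * (-(1/2)) + Real.cos t * (Real.sqrt 3 / 2))) := by
  simp only [homP, Nat.cast_one, mul_one]
  rw [Real.cos_add, Real.sin_add, c23, s23]

lemma homP2 (a b t : ℝ) : homP a b t 2 =
    pt (a * (Real.cos t * (-(1/2)) - Real.sin t * (-(Real.sqrt 3 / 2))))
       (b * (Real.sin t * (-(1/2)) + Real.cos t * (-(Real.sqrt 3 / 2)))) := by
  simp only [homP, Nat.cast_ofNat]
  rw [Real.cos_add, Real.sin_add, c43, s43]

/-- The homothetic Poncelet family is equibrocardal: the quantity
`(s₁² + s₂² + s₃²)/(4Δ)`, i.e. the cotangent of the Brocard angle `ω`, is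
independent of `t` and equals `√3·(a² + b²)/(2ab)`. -/
theorem homothetic_equibrocardal (a b : ℝ) (hab : a ≥ b) (hb : 0 < b) (t : ℝ) :
    (dist (homP a b t 1) (homP a b t 2) ^ 2 +
     dist (homP a b t 2) (homP a b t 0) ^ 2 +
     dist (homP a b t 0) (homP a b t 1) ^ 2) /
      (4 * triArea (homP a b t 0) (homP a b t 1) (homP a b t 2)) =
    Real.sqrt 3 * (a ^ 2 + b ^ 2) / (2 * a * b) ∧
    ∀ ω ∈ Set.Ioo 0 (π / 2),
      Real.cot ω =
        (dist (homP a b t 1) (homP a b t 2) ^ 2 +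
         dist (homP a b t 2) (homP a b t 0) ^ 2 +
         dist (homP a b t 0) (homP a b t 1) ^ 2) /
          (4 * triArea (homP a b t 0) (homP a b t 1) (homP a b t 2)) →
      Real.cot ω = Real.sqrt 3 * (a ^ 2 + b ^ 2) / (2 * a * b) := by
  have ha : 0 < a := lt_of_lt_of_le hb hab
  have hp : Real.sin t ^ 2 + Real.cos t ^ 2 = 1 := Real.sin_sq_add_cos_sq t
  have hq : Real.sqrt 3 ^ 2 = 3 := Real.sq_sqrt (by norm_num)
  have hq0 : (0:ℝ) < Real.sqrt 3 := Real.sqrt_pos.mpr (by norm_num)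
  have hN : dist (homP a b t 1) (homP a b t 2) ^ 2 +
      dist (homP a b t 2) (homP a b t 0) ^ 2 +
      dist (homP a b t 0) (homP a b t 1) ^ 2 = 9/2 * (a^2 + b^2) := by
    rw [homP0, homP1, homP2, dist_pt, dist_pt, dist_pt]
    linear_combination (3/2*a^2*Real.sin t^2 + 3/2*b^2*Real.cos t^2) * hq
      + (9/2*(a^2+b^2)) * hp
  have hdet : det2 (homP a b t 1 - homP a b t 0) (homP a b t 2 - homP a b t 0)
      = 3 * Real.sqrt 3 / 2 * (a * b) := by
    rw [homP0, homP1, homP2, sub_pt, sub_pt, det2, pt0, pt1, pt0, pt1]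
    linear_combination (3 * Real.sqrt 3 / 2 * (a*b)) * hp
  have hA : triArea (homP a b t 0) (homP a b t 1) (homP a b t 2)
      = 3 * Real.sqrt 3 / 4 * (a * b) := by
    rw [triArea, hdet, abs_of_nonneg (by positivity)]
    ring
  have hmain : (dist (homP a b t 1) (homP a b t 2) ^ 2 +
     dist (homP a b t 2) (homP a b t 0) ^ 2 +
     dist (homP a b t 0) (homP a b t 1) ^ 2) /
      (4 * triArea (homP a b t 0) (homP a b t 1) (homP a b t 2)) =
      Real.sqrt 3 * (a ^ 2 + b ^ 2) / (2 * a * b) := by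
    rw [hN, hA]
    rw [div_eq_div_iff (by positivity) (by positivity)]
    linear_combination (-3*a*b*(a^2+b^2)) * hq
  exact ⟨hmain, fun ω _ h => h.trans hmain⟩
end

section
/- For all real a ≥ b > 0, all t ∈ ℝ, and the interior angles θ₁(t), θ₂(t), θ₃(t) of the triangle T(t) of the homothetic Poncelet family, the sum of cotangents satisfies cot θ₁(t) + cot θ₂(t) + cot θ₃(t) = √3·(a² + b²)/(2ab); in particular it is independent of t. -/
open Real EuclideanGeometry

lemma cot_angle2 (u v : EuclideanSpace ℝ (Fin 2))
    (hD : u 0 * v 1 - u 1 * v 0 ≠ 0) :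
    Real.cot (InnerProductGeometry.angle u v) =
      (u 0 * v 0 + u 1 * v 1) / |u 0 * v 1 - u 1 * v 0| := by
  have hI : (inner ℝ u v : ℝ) = u 0 * v 0 + u 1 * v 1 := by
    simp [PiLp.inner_apply, Fin.sum_univ_two, mul_comm]
  have hIu : (inner ℝ u u : ℝ) = u 0 ^ 2 + u 1 ^ 2 := by
    rw [PiLp.inner_apply]; simp [Fin.sum_univ_two, mul_comm]
  have hIv : (inner ℝ v v : ℝ) = v 0 ^ 2 + v 1 ^ 2 := by
    rw [PiLp.inner_apply]; simp [Fin.sum_univ_two, mul_comm]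
  have hu : ‖u‖ = Real.sqrt (u 0 ^ 2 + u 1 ^ 2) := by
    rw [EuclideanSpace.norm_eq]; simp [Fin.sum_univ_two, sq_abs]
  have hv : ‖v‖ = Real.sqrt (v 0 ^ 2 + v 1 ^ 2) := by
    rw [EuclideanSpace.norm_eq]; simp [Fin.sum_univ_two, sq_abs]
  have hD2 : 0 < (u 0 * v 1 - u 1 * v 0) ^ 2 := by positivity
  have hpq : 0 < (u 0 ^ 2 + u 1 ^ 2) * (v 0 ^ 2 + v 1 ^ 2) := by
    nlinarith [sq_nonneg (u 0 * v 0 + u 1 * v 1)]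
  have hN : ‖u‖ * ‖v‖ = Real.sqrt ((u 0 ^ 2 + u 1 ^ 2) * (v 0 ^ 2 + v 1 ^ 2)) := by
    rw [hu, hv, Real.sqrt_mul (by positivity)]
  have hNpos : 0 < ‖u‖ * ‖v‖ := by rw [hN]; positivity
  set A := InnerProductGeometry.angle u v with hA
  have hsin : Real.sin A * (‖u‖ * ‖v‖) = |u 0 * v 1 - u 1 * v 0| := by
    rw [hA, InnerProductGeometry.sin_angle_mul_norm_mul_norm, hI, hIu, hIv,
      show (u 0 ^ 2 + u 1 ^ 2) * (v 0 ^ 2 + v 1 ^ 2) -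
        (u 0 * v 0 + u 1 * v 1) * (u 0 * v 0 + u 1 * v 1)
        = (u 0 * v 1 - u 1 * v 0) ^ 2 by ring, Real.sqrt_sq_eq_abs]
  have hcos : Real.cos A * (‖u‖ * ‖v‖) = u 0 * v 0 + u 1 * v 1 := by
    rw [hA, InnerProductGeometry.cos_angle, hI]
    field_simp
    rw [mul_assoc, mul_div_assoc, div_self hNpos.ne', mul_one]
  rw [Real.cot_eq_cos_div_sin]
  rw [div_eq_div_iff]
  · rw [← hsin, ← hcos]; ring
  · intro h
    rw [h, zero_mul] at hsin
    exact hD (by simpa using hsin.symm)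
  · exact abs_ne_zero.mpr hD


/-- Over the homothetic Poncelet family, the sum of the cotangents of the interior
angles is `√3·(a² + b²)/(2ab)`, independently of `t`.  Here the interior angle at
vertex `A` of triangle `ABC` is the undirected angle `∠ B A C`. -/
theorem homothetic_sum_cot_invariant (a b : ℝ) (hab : a ≥ b) (hb : 0 < b) (t : ℝ) :
    Real.cot (∠ (homP a b t 1) (homP a b t 0) (homP a b t 2)) +
    Real.cot (∠ (homP a b t 0) (homP a b t 1) (homP a b t 2)) +
    Real.cot (∠ (homP a b t 0) (homP a b t 2) (homP a b t 1)) =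
      Real.sqrt 3 * (a ^ 2 + b ^ 2) / (2 * a * b) := by
  have ha : (0:ℝ) < a := lt_of_lt_of_le hb hab
  set c := Real.cos t with hcdef
  set s := Real.sin t with hsdef
  have hcs : s ^ 2 + c ^ 2 = 1 := Real.sin_sq_add_cos_sq t
  set r := Real.sqrt 3 with hrdef
  have hr : r ^ 2 = 3 := Real.sq_sqrt (by norm_num)
  have hrpos : (0:ℝ) < r := Real.sqrt_pos.mpr (by norm_num)
  have hc1 : Real.cos (t + 2*π/3) = -(1/2)*c + -(r/2)*s := by
    rw [Real.cos_add, show (2*π/3:ℝ) = π - π/3 by ring, Real.cos_pi_sub,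
      Real.sin_pi_sub, Real.cos_pi_div_three, Real.sin_pi_div_three, ← hrdef]
    ring
  have hs1 : Real.sin (t + 2*π/3) = -(1/2)*s + r/2*c := by
    rw [Real.sin_add, show (2*π/3:ℝ) = π - π/3 by ring, Real.cos_pi_sub,
      Real.sin_pi_sub, Real.cos_pi_div_three, Real.sin_pi_div_three, ← hrdef]
    ring
  have hc2 : Real.cos (t + 2*π*2/3) = -(1/2)*c + r/2*s := by
    rw [Real.cos_add, show (2*π*2/3:ℝ) = π + π/3 by ring, Real.cos_add, Real.sin_add,
      Real.cos_pi, Real.sin_pi, Real.cos_pi_div_three, Real.sin_pi_div_three, ← hrdef]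
    ring
  have hs2 : Real.sin (t + 2*π*2/3) = -(1/2)*s + -(r/2)*c := by
    rw [Real.sin_add, show (2*π*2/3:ℝ) = π + π/3 by ring, Real.cos_add, Real.sin_add,
      Real.cos_pi, Real.sin_pi, Real.cos_pi_div_three, Real.sin_pi_div_three, ← hrdef]
    ring
  have P00 : homP a b t 0 0 = a * c := by simp [homP, pt, hcdef]
  have P01 : homP a b t 0 1 = b * s := by simp [homP, pt, hsdef]
  have P10 : homP a b t 1 0 = a * (-(1/2)*c + -(r/2)*s) := by
    simp only [homP, pt, Nat.cast_one]
    rw [show (2*π*1/3 : ℝ) = 2*π/3 by ring, hc1]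
    simp
  have P11 : homP a b t 1 1 = b * (-(1/2)*s + r/2*c) := by
    simp only [homP, pt, Nat.cast_one]
    rw [show (2*π*1/3 : ℝ) = 2*π/3 by ring, hs1]
    simp
  have P20 : homP a b t 2 0 = a * (-(1/2)*c + r/2*s) := by
    simp only [homP, pt, Nat.cast_ofNat]
    rw [hc2]; simp
  have P21 : homP a b t 2 1 = b * (-(1/2)*s + -(r/2)*c) := by
    simp only [homP, pt, Nat.cast_ofNat]
    rw [hs2]; simp
  have hsub : ∀ j k : ℕ, ∀ i : Fin 2,
      (homP a b t j -ᵥ homP a b t k) i = homP a b t j i - homP a b t k i := by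
    intro j k i; simp [vsub_eq_sub]
  have hD0 : (a * (-(1/2)*c + -(r/2)*s) - a * c) * (b * (-(1/2)*s + -(r/2)*c) - b * s)
      - (b * (-(1/2)*s + r/2*c) - b * s) * (a * (-(1/2)*c + r/2*s) - a * c)
      = 3*r/2*(a*b) := by linear_combination (3*r/2*(a*b)) * hcs
  have hD1 : (a * c - a * (-(1/2)*c + -(r/2)*s)) * (b * (-(1/2)*s + -(r/2)*c) - b * (-(1/2)*s + r/2*c))
      - (b * s - b * (-(1/2)*s + r/2*c)) * (a * (-(1/2)*c + r/2*s) - a * (-(1/2)*c + -(r/2)*s))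
      = -(3*r/2*(a*b)) := by linear_combination (-(3*r/2*(a*b))) * hcs
  have hD2 : (a * c - a * (-(1/2)*c + r/2*s)) * (b * (-(1/2)*s + r/2*c) - b * (-(1/2)*s + -(r/2)*c))
      - (b * s - b * (-(1/2)*s + -(r/2)*c)) * (a * (-(1/2)*c + -(r/2)*s) - a * (-(1/2)*c + r/2*s))
      = 3*r/2*(a*b) := by linear_combination (3*r/2*(a*b)) * hcs
  rw [EuclideanGeometry.angle, EuclideanGeometry.angle, EuclideanGeometry.angle]
  rw [cot_angle2, cot_angle2, cot_angle2]
  · simp only [hsub, P00, P01, P10, P11, P20, P21]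
    rw [hD0, hD1, hD2, abs_neg, abs_of_pos (by positivity)]
    rw [← add_div, ← add_div, div_eq_div_iff (by positivity) (by positivity)]
    linear_combination (9/2*(a*b)*(a^2+b^2)) * hcs
      + (3/2*(a*b)*(a^2*(s^2-1)+b^2*(c^2-1))) * hr
  · simp only [hsub, P00, P01, P10, P11, P20, P21]
    rw [hD2]; positivity
  · simp only [hsub, P00, P01, P10, P11, P20, P21]
    rw [hD1]; exact neg_ne_zero.mpr (by positivity)
  · simp only [hsub, P00, P01, P10, P11, P20, P21]
    rw [hD0]; positivity
end

section
/- Let a > b > 0, R = 2a²/b, c = √(a² − b²), and let ω ∈ (0, π/2) satisfy cot ω = √(4a² − b²)/b. Then 4·sin²ω ≤ 1 and c = R·sin ω·√(1 − 4·sin²ω). Equivalently, the squared distance 4c² between the two stationary Brocard points equals 4R²·sin²ω·(1 − 4·sin²ω). -/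
open Real

/-- In the Brocard porism with inellipse `E(a,b)`, circumradius `R = 2a²/b` and
Brocard angle `ω` (so `cot ω = √(4a² − b²)/b`), the half-distance `c = √(a² − b²)`
between the two stationary Brocard points satisfies
`c = R·sin ω·√(1 − 4 sin² ω)`; in particular `4 sin² ω ≤ 1`. -/
theorem brocard_distance_formula (a b c R ω : ℝ) (hab : a > b) (hb : 0 < b)
    (hc : c = Real.sqrt (a ^ 2 - b ^ 2)) (hR : R = 2 * a ^ 2 / b)
    (hω : ω ∈ Set.Ioo 0 (π / 2))
    (hcot : Real.cot ω = Real.sqrt (4 * a ^ 2 - b ^ 2) / b) :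
    4 * Real.sin ω ^ 2 ≤ 1 ∧
    c = R * Real.sin ω * Real.sqrt (1 - 4 * Real.sin ω ^ 2) := by
  obtain ⟨h0, h1⟩ := hω
  have ha : 0 < a := lt_trans hb hab
  have hs : 0 < Real.sin ω := Real.sin_pos_of_pos_of_lt_pi h0 (by linarith [Real.pi_pos])
  have hco : 0 < Real.cos ω := Real.cos_pos_of_mem_Ioo ⟨by linarith [Real.pi_pos], h1⟩
  have h4 : (0:ℝ) ≤ 4 * a ^ 2 - b ^ 2 := by nlinarith
  have hcos_eq : Real.cos ω = Real.sqrt (4 * a ^ 2 - b ^ 2) / b * Real.sin ω := by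
    rw [Real.cot_eq_cos_div_sin] at hcot
    field_simp at hcot ⊢
    linarith [hcot]
  have hsq : Real.sin ω ^ 2 * (4 * a ^ 2) = b ^ 2 := by
    have hpyth := Real.sin_sq_add_cos_sq ω
    have h2 : Real.cos ω ^ 2 = (4 * a ^ 2 - b ^ 2) / b ^ 2 * Real.sin ω ^ 2 := by
      rw [hcos_eq]
      rw [mul_pow, div_pow, Real.sq_sqrt h4]
    rw [h2] at hpyth
    field_simp at hpyth
    nlinarith [hpyth]
  have hsin : Real.sin ω = b / (2 * a) := by
    have h1 : Real.sin ω ^ 2 = (b / (2 * a)) ^ 2 := by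
      field_simp
      linarith [hsq]
    have h2 := Real.sqrt_sq hs.le
    rw [h1, Real.sqrt_sq (by positivity)] at h2
    linarith
  have hsin2 : Real.sin ω ^ 2 = b ^ 2 / (4 * a ^ 2) := by
    rw [hsin]; field_simp; ring
  have h14 : 1 - 4 * Real.sin ω ^ 2 = (a ^ 2 - b ^ 2) / a ^ 2 := by
    rw [hsin2]; field_simp
  constructor
  · rw [hsin2, show 4 * (b ^ 2 / (4 * a ^ 2)) = b ^ 2 / a ^ 2 by field_simp,
      div_le_one (by positivity)]
    nlinarith
  · rw [hR, h14, hc, Real.sqrt_div (by nlinarith : (0:ℝ) ≤ a ^ 2 - b ^ 2),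
      Real.sqrt_sq ha.le, hsin]
    field_simp
end
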